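/- Let d ≥ 2 and s ≥ 1 be integers. There exists a constant C = C(d, s) > 0 such that for every integer m ≥ 2, every polynomial f(X) = a_d X^d + … + a_1 X + a_0 ∈ ℤ_m[X] of degree d with gcd(a_d, m) = 1, and every integer H with 1 ≤ H ≤ m, one has T_s ≤ C · ( H^d/m + 1 ) · H^{d(d−1)/2 + 1} · J_{d,s}({1, …, H}), where T_s denotes the number of 2s-tuples (x₁, …, x_{2s}) ∈ {1, …, H}^{2s} with f(x₁) + … + f(x_s) ≡ f(x_{s+1}) + … + f(x_{2s}) (mod m). -/

import Mathlib

open Finset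

set_option maxHeartbeats 1000000

/-- `Tscount m H s f` is the number of `2s`-tuples `(x₁, …, x_{2s}) ∈ {1, …, H}^{2s}` (encoded
as pairs of `s`-tuples) with `f(x₁) + … + f(x_s) ≡ f(x_{s+1}) + … + f(x_{2s}) (mod m)`. -/
def Tscount (m H s : ℕ) (f : Polynomial (ZMod m)) : ℕ :=
  (((Fintype.piFinset fun _ : Fin s => Finset.Icc 1 H) ×ˢ
      (Fintype.piFinset fun _ : Fin s => Finset.Icc 1 H)).filter
    fun p => ∑ i, f.eval ((p.1 i : ℕ) : ZMod m) = ∑ i, f.eval ((p.2 i : ℕ) : ZMod m)).card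

/-- `Jcount d s X` is the number of `2s`-tuples `(x₁, …, x_{2s}) ∈ X^{2s}` (encoded as pairs of
`s`-tuples) satisfying `x₁^j + … + x_s^j = x_{s+1}^j + … + x_{2s}^j` for every `1 ≤ j ≤ d`. -/
def Jcount (d s : ℕ) (X : Finset ℤ) : ℕ :=
  (((Fintype.piFinset fun _ : Fin s => X) ×ˢ (Fintype.piFinset fun _ : Fin s => X)).filter
    fun p => ∀ j ∈ Finset.Icc 1 d, ∑ i, (p.1 i) ^ j = ∑ i, (p.2 i) ^ j).card

namespace Stmt15

variable (d s H : ℕ)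

/-- vector of power sums -/
def PS (x : Fin s → ℤ) : Fin d → ℤ := fun k => ∑ i, x i ^ ((k : ℕ) + 1)

noncomputable def boxZ : Finset (Fin s → ℤ) := Fintype.piFinset fun _ => Finset.Icc 1 (H : ℤ)

noncomputable def fib (v : Fin d → ℤ) : Finset ((Fin s → ℤ) × (Fin s → ℤ)) :=
  ((boxZ s H) ×ˢ (boxZ s H)).filter fun p => PS d s p.1 - PS d s p.2 = v

noncomputable def rfun (lam : Fin d → ℤ) : ℕ := ((boxZ s H).filter fun x => PS d s x = lam).card

lemma fib_card (v : Fin d → ℤ) :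
    (fib d s H v).card
      = ∑ lam ∈ (boxZ s H).image (PS d s), rfun d s H (lam + v) * rfun d s H lam := by
  rw [Finset.card_eq_sum_card_fiberwise (f := fun p => PS d s p.2)
    (t := (boxZ s H).image (PS d s)) (fun p hp => by
      simp only [fib, mem_coe, mem_filter, mem_product] at hp
      exact Finset.mem_image_of_mem _ hp.1.2)]
  refine Finset.sum_congr rfl fun lam _ => ?_
  have : (fib d s H v).filter (fun p => PS d s p.2 = lam)
      = ((boxZ s H).filter fun x => PS d s x = lam + v) ×ˢ
        ((boxZ s H).filter fun x => PS d s x = lam) := by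
    ext ⟨a, b⟩
    simp only [fib, mem_filter, mem_product]
    constructor
    · rintro ⟨⟨⟨ha, hb⟩, hv⟩, hl⟩
      refine ⟨⟨ha, ?_⟩, hb, hl⟩
      rw [sub_eq_iff_eq_add] at hv
      rw [hv, hl, add_comm]
    · rintro ⟨⟨ha, hav⟩, hb, hbl⟩
      exact ⟨⟨⟨ha, hb⟩, by rw [hav, hbl]; abel⟩, hbl⟩
  rw [this, Finset.card_product]
  rfl

lemma rfun_ne_zero {lam : Fin d → ℤ} (h : rfun d s H lam ≠ 0) :
    lam ∈ (boxZ s H).image (PS d s) := by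
  rw [rfun, Finset.card_ne_zero] at h
  obtain ⟨x, hx⟩ := h
  simp only [mem_filter] at hx
  exact Finset.mem_image.mpr ⟨x, hx.1, hx.2⟩

lemma fib_card_le (v : Fin d → ℤ) : (fib d s H v).card ≤ (fib d s H 0).card := by
  set Λ := (boxZ s H).image (PS d s) with hΛ
  set r := rfun d s H with hr
  have h0 : (fib d s H 0).card = ∑ lam ∈ Λ, r lam * r lam := by
    rw [fib_card]; simp; rfl
  have hv : (fib d s H v).card = ∑ lam ∈ Λ, r (lam + v) * r lam := fib_card d s H v
  have shift : ∑ lam ∈ Λ, r (lam + v) ^ 2 ≤ ∑ lam ∈ Λ, r lam ^ 2 := by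
    have hinj : ∀ x ∈ Λ, ∀ y ∈ Λ, x + v = y + v → x = y := fun x _ y _ h =>
      add_right_cancel h
    have himg : ∑ lam ∈ Λ, r (lam + v) ^ 2 = ∑ mu ∈ Λ.image (· + v), r mu ^ 2 :=
      (Finset.sum_image (f := fun mu => r mu ^ 2) (g := (· + v)) hinj).symm
    rw [himg]
    have hnz : ∀ mu ∈ Λ.image (· + v), r mu ^ 2 ≠ 0 → mu ∈ Λ := by
      intro mu _ hne
      exact rfun_ne_zero d s H (fun h0 => hne (by show rfun d s H mu ^ 2 = 0; rw [h0]; norm_num))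
    rw [← Finset.sum_filter_of_ne hnz]
    exact Finset.sum_le_sum_of_subset (fun x hx => (Finset.mem_filter.mp hx).2)
  have cs : (∑ lam ∈ Λ, r (lam + v) * r lam) ^ 2
      ≤ (∑ lam ∈ Λ, r (lam + v) ^ 2) * ∑ lam ∈ Λ, r lam ^ 2 :=
    Finset.sum_mul_sq_le_sq_mul_sq Λ _ _
  have : (fib d s H v).card ^ 2 ≤ (fib d s H 0).card ^ 2 := by
    rw [hv, h0]
    calc (∑ lam ∈ Λ, r (lam + v) * r lam) ^ 2
        ≤ (∑ lam ∈ Λ, r (lam + v) ^ 2) * ∑ lam ∈ Λ, r lam ^ 2 := cs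
      _ ≤ (∑ lam ∈ Λ, r lam ^ 2) * ∑ lam ∈ Λ, r lam ^ 2 := Nat.mul_le_mul_right _ shift
      _ = (∑ lam ∈ Λ, r lam * r lam) ^ 2 := by rw [sq]; congr 1 <;> exact Finset.sum_congr rfl fun lam _ => pow_two _
  exact Nat.pow_le_pow_iff_left (by norm_num) |>.mp this


lemma Jcount_eq (hd : 1 ≤ d) :
    Jcount d s (Finset.Icc 1 (H : ℤ)) = (fib d s H 0).card := by
  unfold Jcount fib boxZ
  congr 1
  refine Finset.filter_congr fun p _ => ?_
  rw [sub_eq_zero, funext_iff]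
  constructor
  · intro h k
    have := h ((k : ℕ) + 1) (Finset.mem_Icc.mpr ⟨Nat.le_add_left _ _, k.isLt⟩)
    simpa [PS] using this
  · intro h j hj
    rw [Finset.mem_Icc] at hj
    have := h ⟨j - 1, by omega⟩
    simpa [PS, Nat.sub_add_cancel hj.1] using this

lemma stepA (m : ℕ) (f : Polynomial (ZMod m)) (hf : f.natDegree = d) (x y : Fin s → ℕ) :
    ((∑ i, f.eval ((x i : ℕ) : ZMod m)) = ∑ i, f.eval ((y i : ℕ) : ZMod m)) ↔
    (∑ k : Fin d, f.coeff ((k : ℕ) + 1) *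
      (((∑ i, (x i : ℤ) ^ ((k : ℕ) + 1)) - ∑ i, (y i : ℤ) ^ ((k : ℕ) + 1) : ℤ) : ZMod m)) = 0 := by
  have hev : ∀ z : Fin s → ℕ, (∑ i, f.eval ((z i : ℕ) : ZMod m))
      = ∑ j ∈ Finset.range (d + 1), f.coeff j * ∑ i, ((z i : ℕ) : ZMod m) ^ j := by
    intro z
    calc ∑ i, f.eval ((z i : ℕ) : ZMod m)
        = ∑ i, ∑ j ∈ Finset.range (d + 1), f.coeff j * ((z i : ℕ) : ZMod m) ^ j := by
          refine Finset.sum_congr rfl fun i _ => ?_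
          rw [Polynomial.eval_eq_sum_range, hf]
      _ = ∑ j ∈ Finset.range (d + 1), ∑ i, f.coeff j * ((z i : ℕ) : ZMod m) ^ j :=
          Finset.sum_comm
      _ = _ := by
          refine Finset.sum_congr rfl fun j _ => ?_
          rw [Finset.mul_sum]
  have key : (∑ j ∈ Finset.range (d + 1), f.coeff j * ∑ i, ((x i : ℕ) : ZMod m) ^ j)
      - (∑ j ∈ Finset.range (d + 1), f.coeff j * ∑ i, ((y i : ℕ) : ZMod m) ^ j)
      = ∑ k : Fin d, f.coeff ((k : ℕ) + 1) *
        (((∑ i, (x i : ℤ) ^ ((k : ℕ) + 1)) - ∑ i, (y i : ℤ) ^ ((k : ℕ) + 1) : ℤ) : ZMod m) := by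
    rw [← Finset.sum_sub_distrib, Finset.sum_range_succ']
    have h0 : f.coeff 0 * ∑ i : Fin s, ((x i : ℕ) : ZMod m) ^ 0
        - f.coeff 0 * ∑ i : Fin s, ((y i : ℕ) : ZMod m) ^ 0 = 0 := by simp
    rw [h0, add_zero,
      Fin.sum_univ_eq_sum_range (fun k => f.coeff (k + 1) *
        (((∑ i, (x i : ℤ) ^ (k + 1)) - ∑ i, (y i : ℤ) ^ (k + 1) : ℤ) : ZMod m)) d]
    refine Finset.sum_congr rfl fun j _ => ?_
    rw [← mul_sub]
    congr 1
    push_cast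
    ring
  rw [hev, hev, ← sub_eq_zero, key]

def sigmaN (p : (Fin s → ℕ) × (Fin s → ℕ)) : Fin d → ℤ := fun k =>
  (∑ i, (p.1 i : ℤ) ^ ((k : ℕ) + 1)) - ∑ i, (p.2 i : ℤ) ^ ((k : ℕ) + 1)

noncomputable def Vset (m : ℕ) (f : Polynomial (ZMod m)) : Finset (Fin d → ℤ) :=
  (Fintype.piFinset fun k : Fin d =>
      Finset.Icc (-(s * H ^ ((k : ℕ) + 1) : ℤ)) (s * H ^ ((k : ℕ) + 1))).filter
    fun v => ∑ k : Fin d, f.coeff ((k : ℕ) + 1) * ((v k : ℤ) : ZMod m) = 0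

lemma T_le (hs : 1 ≤ s) (m : ℕ) (f : Polynomial (ZMod m)) (hf : f.natDegree = d) :
    Tscount m H s f ≤ (Vset d s H m f).card * (fib d s H 0).card := by
  classical
  set Tset := (((Fintype.piFinset fun _ : Fin s => Finset.Icc 1 H) ×ˢ
      (Fintype.piFinset fun _ : Fin s => Finset.Icc 1 H)).filter
    fun p => ∑ i, f.eval ((p.1 i : ℕ) : ZMod m) = ∑ i, f.eval ((p.2 i : ℕ) : ZMod m)) with hT
  have hmem : ∀ p ∈ Tset, sigmaN d s p ∈ Vset d s H m f := by
    intro p hp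
    simp only [hT, Finset.mem_filter, Finset.mem_product, Fintype.mem_piFinset] at hp
    obtain ⟨⟨h1, h2⟩, hcong⟩ := hp
    rw [Vset, Finset.mem_filter]
    constructor
    · rw [Fintype.mem_piFinset]
      intro k
      rw [Finset.mem_Icc]
      have bx : ∀ z : Fin s → ℕ, (∀ i, z i ∈ Finset.Icc 1 H) →
          (s : ℤ) ≤ (∑ i, (z i : ℤ) ^ ((k : ℕ) + 1)) ∧
          (∑ i, (z i : ℤ) ^ ((k : ℕ) + 1)) ≤ s * H ^ ((k : ℕ) + 1) := by
        intro z hz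
        constructor
        · calc (s : ℤ) = ∑ _i : Fin s, (1 : ℤ) := by simp
            _ ≤ _ := Finset.sum_le_sum fun i _ => one_le_pow₀ (by
                have := (Finset.mem_Icc.mp (hz i)).1
                exact_mod_cast this)
        · calc (∑ i, (z i : ℤ) ^ ((k : ℕ) + 1)) ≤ ∑ _i : Fin s, (H : ℤ) ^ ((k : ℕ) + 1) :=
              Finset.sum_le_sum fun i _ => pow_le_pow_left₀ (by positivity) (by
                have := (Finset.mem_Icc.mp (hz i)).2
                exact_mod_cast this) _
            _ = s * H ^ ((k : ℕ) + 1) := by simp [mul_comm]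
      obtain ⟨hx1, hx2⟩ := bx p.1 h1
      obtain ⟨hy1, hy2⟩ := bx p.2 h2
      have hs' : (1 : ℤ) ≤ s := by exact_mod_cast hs
      constructor
      · simp only [sigmaN]; linarith
      · simp only [sigmaN]; linarith
    · simp only [sigmaN]
      rw [← stepA d s m f hf p.1 p.2]
      exact hcong
  rw [show Tscount m H s f = Tset.card from rfl,
    Finset.card_eq_sum_card_fiberwise hmem]
  have hfiber : ∀ v, (Tset.filter fun p => sigmaN d s p = v).card ≤ (fib d s H v).card := by
    intro v
    apply Finset.card_le_card_of_injOn (fun p => ((fun i => (p.1 i : ℤ)), fun i => (p.2 i : ℤ)))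
    · intro p hp
      simp only [Finset.mem_coe, Finset.mem_filter, hT, Finset.mem_product, Fintype.mem_piFinset] at hp
      obtain ⟨⟨⟨h1, h2⟩, _⟩, hv⟩ := hp
      rw [Finset.mem_coe, fib, Finset.mem_filter]
      refine ⟨?_, ?_⟩
      · rw [Finset.mem_product]
        have hbz : ∀ z : Fin s → ℕ, (∀ i, z i ∈ Finset.Icc 1 H) →
            (fun i => (z i : ℤ)) ∈ boxZ s H := by
          intro z hz
          rw [boxZ, Fintype.mem_piFinset]
          intro i
          rw [Finset.mem_Icc]
          exact ⟨by exact_mod_cast (Finset.mem_Icc.mp (hz i)).1,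
            by exact_mod_cast (Finset.mem_Icc.mp (hz i)).2⟩
        exact ⟨hbz p.1 h1, hbz p.2 h2⟩
      · funext k
        rw [← hv]
        simp [PS, sigmaN]
    · intro p hp q hq hpq
      simp only [Prod.mk.injEq] at hpq
      obtain ⟨h1, h2⟩ := hpq
      have e1 : p.1 = q.1 := by
        funext i
        have := congrFun h1 i
        exact_mod_cast this
      have e2 : p.2 = q.2 := by
        funext i
        have := congrFun h2 i
        exact_mod_cast this
      exact Prod.ext e1 e2
  calc ∑ v ∈ Vset d s H m f, (Tset.filter fun p => sigmaN d s p = v).card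
      ≤ ∑ v ∈ Vset d s H m f, (fib d s H 0).card :=
        Finset.sum_le_sum fun v _ => (hfiber v).trans (fib_card_le d s H v)
    _ = (Vset d s H m f).card * (fib d s H 0).card := by
        rw [Finset.sum_const, smul_eq_mul]


lemma sum_if (n : ℕ) (hn : 1 ≤ n) :
    (∑ j ∈ Finset.range n, if j = n - 1 then 0 else j + 1) = n * (n - 1) / 2 := by
  obtain ⟨e, rfl⟩ : ∃ e, n = e + 1 := ⟨n - 1, by omega⟩
  rw [Finset.sum_range_succ]
  simp only [Nat.add_sub_cancel, if_pos rfl, add_zero]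
  rw [Finset.sum_congr rfl (fun j hj => if_neg (by
    rw [Finset.mem_range] at hj; omega))]
  have h2 : ∑ j ∈ Finset.range e, (j + 1) = ∑ i ∈ Finset.range (e + 1), i := by
    rw [Finset.sum_range_succ']
    simp
  rw [h2, Finset.sum_range_id]
  simp

lemma S_card_le (m : ℕ) (hm : 0 < m) (L : ℤ) (hL : 0 ≤ L) (t : ZMod m) :
    ((Finset.Icc (-L) L).filter fun x : ℤ => (x : ZMod m) = t).card
      ≤ ((2 * L) / (m : ℤ)).toNat + 1 := by
  have hm' : (0 : ℤ) < (m : ℤ) := by exact_mod_cast hm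
  have key : ((Finset.Icc (-L) L).filter fun x : ℤ => (x : ZMod m) = t).card
      ≤ (Finset.range (((2 * L) / (m : ℤ)).toNat + 1)).card := by
    apply Finset.card_le_card_of_injOn (fun x : ℤ => ((x + L) / (m : ℤ)).toNat)
    · intro x hx
      simp only [Finset.mem_coe, Finset.mem_filter, Finset.mem_Icc] at hx
      rw [Finset.mem_coe, Finset.mem_range, Nat.lt_succ_iff]
      have hle : (x + L) / (m : ℤ) ≤ (2 * L) / (m : ℤ) :=
        Int.ediv_le_ediv hm' (by linarith [hx.1.1])
      exact Int.toNat_le_toNat hle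
    · intro x hx y hy h
      simp only [Finset.coe_filter, Set.mem_setOf_eq, Finset.mem_Icc] at hx hy
      have hx0 : (0 : ℤ) ≤ (x + L) / (m : ℤ) := Int.ediv_nonneg (by linarith [hx.1.1]) (le_of_lt hm')
      have hy0 : (0 : ℤ) ≤ (y + L) / (m : ℤ) := Int.ediv_nonneg (by linarith [hy.1.1]) (le_of_lt hm')
      have h' : ((x + L) / (m : ℤ)).toNat = ((y + L) / (m : ℤ)).toNat := h
      have hq : (x + L) / (m : ℤ) = (y + L) / (m : ℤ) := by
        rw [← Int.toNat_of_nonneg hx0, ← Int.toNat_of_nonneg hy0, h']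
      have hmod : x % (m : ℤ) = y % (m : ℤ) :=
        (ZMod.intCast_eq_intCast_iff' x y m).mp (hx.2.trans hy.2.symm)
      have hr : (x + L) % (m : ℤ) = (y + L) % (m : ℤ) := Int.ModEq.add_right L hmod
      have ex := Int.mul_ediv_add_emod (x + L) (m : ℤ)
      have ey := Int.mul_ediv_add_emod (y + L) (m : ℤ)
      rw [hq, hr] at ex
      linarith
  simpa using key

lemma Vset_card (hd1 : 1 ≤ d) (hH : 1 ≤ H) (m : ℕ) (hm : 0 < m) (f : Polynomial (ZMod m))
    (hf : f.natDegree = d) (hu : IsUnit f.leadingCoeff) :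
    (Vset d s H m f).card ≤ ((2 * s + 1) ^ d * H ^ (d * (d - 1) / 2)) *
      (((2 * ((s : ℤ) * (H : ℤ) ^ d)) / (m : ℤ)).toNat + 1) := by
  classical
  have hm' : (0 : ℤ) < (m : ℤ) := by exact_mod_cast hm
  set lst : Fin d := ⟨d - 1, by omega⟩ with hlstdef
  have hlst : ((lst : ℕ) + 1) = d := by simp [hlstdef]; omega
  have hunit : IsUnit (f.coeff d) := by
    rwa [Polynomial.leadingCoeff, hf] at hu
  set A : Finset (Fin d → ℤ) := Fintype.piFinset fun k : Fin d =>
    if k = lst then ({0} : Finset ℤ)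
    else Finset.Icc (-(s * H ^ ((k : ℕ) + 1) : ℤ)) (s * H ^ ((k : ℕ) + 1)) with hA
  set L : ℤ := (s : ℤ) * (H : ℤ) ^ d with hLdef
  have hL0 : 0 ≤ L := by positivity
  set K : ℕ := ((2 * L) / (m : ℤ)).toNat + 1 with hK
  have hmemA : ∀ v ∈ Vset d s H m f, Function.update v lst 0 ∈ A := by
    intro v hv
    rw [Vset, Finset.mem_filter, Fintype.mem_piFinset] at hv
    rw [hA, Fintype.mem_piFinset]
    intro k
    by_cases hk : k = lst
    · subst hk; simp [Function.update_self]
    · rw [if_neg hk, Function.update_of_ne hk]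
      exact hv.1 k
  rw [Finset.card_eq_sum_card_fiberwise hmemA]
  have hfiber : ∀ w ∈ A, ((Vset d s H m f).filter fun v => Function.update v lst 0 = w).card ≤ K := by
    intro w _
    set t : ZMod m := (↑hunit.unit⁻¹ : ZMod m) *
      (-(∑ k ∈ Finset.univ.erase lst, f.coeff ((k : ℕ) + 1) * ((w k : ℤ) : ZMod m))) with ht
    have step : ((Vset d s H m f).filter fun v => Function.update v lst 0 = w).card
        ≤ ((Finset.Icc (-L) L).filter fun x : ℤ => (x : ZMod m) = t).card := by
      apply Finset.card_le_card_of_injOn (fun v => v lst)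
      · intro v hv
        simp only [Finset.mem_coe, Finset.mem_filter] at hv
        obtain ⟨hv1, hv2⟩ := hv
        rw [Vset, Finset.mem_filter, Fintype.mem_piFinset] at hv1
        obtain ⟨hbd, hcong⟩ := hv1
        rw [Finset.mem_coe, Finset.mem_filter]
        constructor
        · have := hbd lst
          rw [Finset.mem_Icc] at this ⊢
          rw [hlst] at this
          exact this
        · -- congruence determines v lst
          have hsplit : f.coeff ((lst : ℕ) + 1) * ((v lst : ℤ) : ZMod m)
              + ∑ k ∈ Finset.univ.erase lst, f.coeff ((k : ℕ) + 1) * ((v k : ℤ) : ZMod m) = 0 := by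
            rw [← hcong]
            exact Finset.add_sum_erase Finset.univ
              (fun k : Fin d => f.coeff ((k : ℕ) + 1) * ((v k : ℤ) : ZMod m)) (Finset.mem_univ lst)
          have hwk : ∀ k ∈ Finset.univ.erase lst, v k = w k := by
            intro k hk
            have hne : k ≠ lst := (Finset.mem_erase.mp hk).1
            rw [← hv2, Function.update_of_ne hne]
          rw [Finset.sum_congr rfl (fun k hk => by rw [hwk k hk])] at hsplit
          rw [hlst] at hsplit
          have : f.coeff d * ((v lst : ℤ) : ZMod m)
              = -(∑ k ∈ Finset.univ.erase lst, f.coeff ((k : ℕ) + 1) * ((w k : ℤ) : ZMod m)) := by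
            linear_combination hsplit
          rw [ht, ← this, ← mul_assoc, IsUnit.val_inv_mul, one_mul]
      · intro v hv v' hv' hvv
        simp only [Finset.coe_filter, Set.mem_setOf_eq] at hv hv'
        funext k
        by_cases hk : k = lst
        · subst hk; exact hvv
        · have h1 := congrFun (hv.2.trans hv'.2.symm) k
          rwa [Function.update_of_ne hk, Function.update_of_ne hk] at h1
    calc ((Vset d s H m f).filter fun v => Function.update v lst 0 = w).card
        ≤ ((Finset.Icc (-L) L).filter fun x : ℤ => (x : ZMod m) = t).card := step
      _ ≤ K := S_card_le m hm L hL0 t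
  calc ∑ w ∈ A, ((Vset d s H m f).filter fun v => Function.update v lst 0 = w).card
      ≤ ∑ _w ∈ A, K := Finset.sum_le_sum hfiber
    _ = A.card * K := by rw [Finset.sum_const, smul_eq_mul]
    _ ≤ ((2 * s + 1) ^ d * H ^ (d * (d - 1) / 2)) * K := by
        apply Nat.mul_le_mul_right
        -- bound A.card
        rw [hA, Fintype.card_piFinset]
        have hbd : ∀ k : Fin d,
            (if k = lst then ({0} : Finset ℤ)
              else Finset.Icc (-(s * H ^ ((k : ℕ) + 1) : ℤ)) (s * H ^ ((k : ℕ) + 1))).card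
            ≤ (2 * s + 1) * H ^ (if k = lst then 0 else (k : ℕ) + 1) := by
          intro k
          by_cases hk : k = lst
          · simp [hk]
          · rw [if_neg hk, if_neg hk]
            have hcard : (Finset.Icc (-(s * H ^ ((k : ℕ) + 1) : ℤ)) (s * H ^ ((k : ℕ) + 1))).card
                = 2 * s * H ^ ((k : ℕ) + 1) + 1 := by
              rw [Int.card_Icc]
              have heq : ((s : ℤ) * (H : ℤ) ^ ((k : ℕ) + 1) + 1 - -((s : ℤ) * (H : ℤ) ^ ((k : ℕ) + 1)))
                  = ((2 * s * H ^ ((k : ℕ) + 1) + 1 : ℕ) : ℤ) := by push_cast; ring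
              rw [heq, Int.toNat_natCast]
            have hHk : 1 ≤ H ^ ((k : ℕ) + 1) := Nat.one_le_pow _ _ hH
            rw [hcard]
            nlinarith [hHk]
        calc ∏ k : Fin d, (if k = lst then ({0} : Finset ℤ)
              else Finset.Icc (-(s * H ^ ((k : ℕ) + 1) : ℤ)) (s * H ^ ((k : ℕ) + 1))).card
            ≤ ∏ k : Fin d, (2 * s + 1) * H ^ (if k = lst then 0 else (k : ℕ) + 1) :=
              Finset.prod_le_prod' fun k _ => hbd k
          _ = (2 * s + 1) ^ d * H ^ (∑ k : Fin d, if k = lst then 0 else (k : ℕ) + 1) := by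
              rw [Finset.prod_mul_distrib, Finset.prod_const, Finset.prod_pow_eq_pow_sum]
              simp
          _ = (2 * s + 1) ^ d * H ^ (d * (d - 1) / 2) := by
              congr 1
              have hsum : (∑ k : Fin d, if k = lst then 0 else (k : ℕ) + 1)
                  = ∑ j ∈ Finset.range d, (if j = d - 1 then 0 else j + 1) := by
                rw [← Fin.sum_univ_eq_sum_range (fun j => if j = d - 1 then 0 else j + 1) d]
                refine Finset.sum_congr rfl fun k _ => ?_
                congr 1
                simp [hlstdef, Fin.ext_iff]
              rw [hsum, sum_if d hd1]

end Stmt15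

theorem stmt_15 (d s : ℕ) (hd : 2 ≤ d) (hs : 1 ≤ s) :
    ∃ C : ℝ, 0 < C ∧ ∀ m : ℕ, 2 ≤ m → ∀ f : Polynomial (ZMod m),
      f.natDegree = d → IsUnit f.leadingCoeff →
      ∀ H : ℕ, 1 ≤ H → H ≤ m →
      (Tscount m H s f : ℝ) ≤
        C * ((H : ℝ) ^ d / (m : ℝ) + 1) * (H : ℝ) ^ (d * (d - 1) / 2 + 1) *
          (Jcount d s (Finset.Icc (1 : ℤ) (H : ℤ)) : ℝ) := by
  refine ⟨((2 * s + 1 : ℝ)) ^ (d + 1), by positivity, ?_⟩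
  intro m hm f hf hu H hH hHm
  have hm0 : 0 < m := by omega
  have hmR : (0 : ℝ) < (m : ℝ) := by exact_mod_cast hm0
  have hHR : (1 : ℝ) ≤ (H : ℝ) := by exact_mod_cast hH
  have hd1 : 1 ≤ d := by omega
  -- key inequalities
  have key1 : Tscount m H s f ≤ (Stmt15.Vset d s H m f).card * (Stmt15.fib d s H 0).card :=
    Stmt15.T_le d s H hs m f hf
  have hJ : (Stmt15.fib d s H 0).card = Jcount d s (Finset.Icc 1 (H : ℤ)) :=
    (Stmt15.Jcount_eq d s H hd1).symm
  have key2 := Stmt15.Vset_card d s H hd1 hH m hm0 f hf hu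
  set L : ℤ := (s : ℤ) * (H : ℤ) ^ d with hL
  have hL0 : (0 : ℤ) ≤ L := by positivity
  -- bound on K in ℝ
  have hKR : ((((2 * L) / (m : ℤ)).toNat + 1 : ℕ) : ℝ)
      ≤ (2 * s + 1) * ((H : ℝ) ^ d / (m : ℝ) + 1) := by
    have hq0 : (0 : ℤ) ≤ (2 * L) / (m : ℤ) :=
      Int.ediv_nonneg (by linarith) (by positivity)
    have hqle : (((2 * L) / (m : ℤ) : ℤ) : ℝ) ≤ 2 * s * ((H : ℝ) ^ d / (m : ℝ)) := by
      have hdm := Int.mul_ediv_add_emod (2 * L) (m : ℤ)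
      have hr0 : (0 : ℤ) ≤ (2 * L) % (m : ℤ) :=
        Int.emod_nonneg _ (by exact_mod_cast hm0.ne')
      have hle : (m : ℤ) * ((2 * L) / (m : ℤ)) ≤ 2 * L := by linarith
      have hleR : (m : ℝ) * (((2 * L) / (m : ℤ) : ℤ) : ℝ) ≤ 2 * (s : ℝ) * (H : ℝ) ^ d := by
        have h2 : (((m : ℤ) * ((2 * L) / (m : ℤ)) : ℤ) : ℝ) ≤ ((2 * L : ℤ) : ℝ) := by
          exact_mod_cast hle
        rw [hL] at h2
        push_cast at h2
        linarith
      have heq : 2 * (s : ℝ) * ((H : ℝ) ^ d / (m : ℝ)) = (2 * (s : ℝ) * (H : ℝ) ^ d) / (m : ℝ) := by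
        ring
      rw [heq, le_div_iff₀ hmR]
      nlinarith [hleR]
    have hcastK : ((((2 * L) / (m : ℤ)).toNat + 1 : ℕ) : ℝ)
        = (((2 * L) / (m : ℤ) : ℤ) : ℝ) + 1 := by
      rw [Nat.cast_add, Nat.cast_one, ← Int.cast_natCast, Int.toNat_of_nonneg hq0]
    rw [hcastK]
    have h0 : (0 : ℝ) ≤ (H : ℝ) ^ d / (m : ℝ) := by positivity
    have hs0 : (0 : ℝ) ≤ (s : ℝ) := Nat.cast_nonneg _
    nlinarith [hqle]
  -- assemble
  have hcast1 : (Tscount m H s f : ℝ)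
      ≤ ((Stmt15.Vset d s H m f).card : ℝ) * (Jcount d s (Finset.Icc 1 (H : ℤ)) : ℝ) := by
    rw [← hJ]
    exact_mod_cast key1
  have hVR : ((Stmt15.Vset d s H m f).card : ℝ)
      ≤ ((2 * s + 1 : ℝ)) ^ d * (H : ℝ) ^ (d * (d - 1) / 2) *
        ((2 * s + 1) * ((H : ℝ) ^ d / (m : ℝ) + 1)) := by
    have := (Nat.cast_le (α := ℝ)).mpr key2
    push_cast at this
    calc ((Stmt15.Vset d s H m f).card : ℝ)
        ≤ (2 * (s : ℝ) + 1) ^ d * (H : ℝ) ^ (d * (d - 1) / 2) *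
            ((((2 * L) / (m : ℤ)).toNat + 1 : ℕ) : ℝ) := by push_cast; linarith [this]
      _ ≤ _ := by
          apply mul_le_mul_of_nonneg_left hKR
          positivity
  have hJ0 : (0 : ℝ) ≤ (Jcount d s (Finset.Icc 1 (H : ℤ)) : ℝ) := Nat.cast_nonneg _
  calc (Tscount m H s f : ℝ)
      ≤ ((Stmt15.Vset d s H m f).card : ℝ) * (Jcount d s (Finset.Icc 1 (H : ℤ)) : ℝ) := hcast1
    _ ≤ (((2 * s + 1 : ℝ)) ^ d * (H : ℝ) ^ (d * (d - 1) / 2) *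
          ((2 * s + 1) * ((H : ℝ) ^ d / (m : ℝ) + 1))) *
          (Jcount d s (Finset.Icc 1 (H : ℤ)) : ℝ) :=
        mul_le_mul_of_nonneg_right hVR hJ0
    _ = ((2 * s + 1 : ℝ)) ^ (d + 1) * ((H : ℝ) ^ d / (m : ℝ) + 1) *
          (H : ℝ) ^ (d * (d - 1) / 2) * (Jcount d s (Finset.Icc 1 (H : ℤ)) : ℝ) := by
        ring
    _ ≤ ((2 * s + 1 : ℝ)) ^ (d + 1) * ((H : ℝ) ^ d / (m : ℝ) + 1) *
          (H : ℝ) ^ (d * (d - 1) / 2 + 1) * (Jcount d s (Finset.Icc 1 (H : ℤ)) : ℝ) := by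
        have hpow : (H : ℝ) ^ (d * (d - 1) / 2) ≤ (H : ℝ) ^ (d * (d - 1) / 2 + 1) :=
          pow_le_pow_right₀ hHR (Nat.le_succ _)
        have h1 : (0 : ℝ) ≤ ((H : ℝ) ^ d / (m : ℝ) + 1) := by positivity
        have h2 : (0 : ℝ) ≤ ((2 * s + 1 : ℝ)) ^ (d + 1) := by positivity
        apply mul_le_mul_of_nonneg_right _ hJ0
        apply mul_le_mul_of_nonneg_left hpow
        positivity
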